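/- If the linear system x' = A(t)x admits an algebraic dichotomy with respect to a growth rate μ, then the only bounded solution of x' = A(t)x on ℝ is the zero solution; that is, every solution x : ℝ → ℝⁿ of x' = A(t)x with sup_{t∈ℝ} ‖x(t)‖ < ∞ satisfies x(t) = 0 for all t ∈ ℝ. -/

import Mathlib

open MeasureTheory Filter Set

theorem algebraic_dichotomy_bounded_solution_zero {n : ℕ}
    (μ : ℝ → ℝ)
    (hμ_pos : ∀ t, 0 < μ t)
    (hμ_mono : StrictMono μ)
    (hμ_zero : μ 0 = 1)
    (hμ_bot : Filter.Tendsto μ Filter.atBot (nhds 0))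
    (hμ_top : Filter.Tendsto μ Filter.atTop Filter.atTop)
    (A : ℝ → EuclideanSpace ℝ (Fin n) →L[ℝ] EuclideanSpace ℝ (Fin n))
    (hA_cont : Continuous A)
    (hA_bdd : ∃ C, ∀ t, ‖A t‖ ≤ C)
    (T : ℝ → ℝ → EuclideanSpace ℝ (Fin n) →L[ℝ] EuclideanSpace ℝ (Fin n))
    (hT_id : ∀ t, T t t = ContinuousLinearMap.id ℝ (EuclideanSpace ℝ (Fin n)))
    (hT_cocycle : ∀ t τ s, (T t τ).comp (T τ s) = T t s)
    (hT_sol : ∀ s x₀ t, HasDerivAt (fun r => T r s x₀) (A t (T t s x₀)) t)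
    (P : ℝ → EuclideanSpace ℝ (Fin n) →L[ℝ] EuclideanSpace ℝ (Fin n))
    (hP_proj : ∀ s, (P s).comp (P s) = P s)
    (K α : ℝ) (hK : 0 < K) (hα : 0 < α)
    (h_commute : ∀ t s, (T t s).comp (P s) = (P t).comp (T t s))
    (h_dichP : ∀ t s, s ≤ t → ‖(T t s).comp (P s)‖ ≤ K * (μ t / μ s) ^ (-α))
    (h_dichQ : ∀ t s, t ≤ s →
      ‖(T t s).comp (ContinuousLinearMap.id ℝ (EuclideanSpace ℝ (Fin n)) - P s)‖ ≤ K * (μ s / μ t) ^ (-α))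
    :
    ∀ x : ℝ → EuclideanSpace ℝ (Fin n),
      (∀ t, HasDerivAt x (A t (x t)) t) →
      (∃ C, ∀ t, ‖x t‖ ≤ C) →
      ∀ t, x t = 0 := by
  intro x hx hbdd
  obtain ⟨C, hC⟩ := hbdd
  obtain ⟨C₀, hC₀⟩ := hA_bdd
  have hC0 : 0 ≤ C := le_trans (norm_nonneg _) (hC 0)
  -- uniform Lipschitz constant for the vector field
  have hv : ∀ r : ℝ, LipschitzOnWith (Real.toNNReal C₀) (fun y => A r y)
      ((fun _ => (univ : Set (EuclideanSpace ℝ (Fin n)))) r) := by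
    intro r
    refine ((A r).lipschitz.weaken ?_).lipschitzOnWith
    rw [← NNReal.coe_le_coe, coe_nnnorm, Real.coe_toNNReal']
    exact (hC₀ r).trans (le_max_left _ _)
  -- uniqueness: x t = T t s (x s) for all s, t
  have key : ∀ s t : ℝ, x t = T t s (x s) := by
    intro s t
    have hxs : x s = T s s (x s) := by rw [hT_id]; rfl
    rcases le_total s t with h | h
    · have := ODE_solution_unique_of_mem_Icc_right (v := fun r y => A r y)
        (s := fun _ => (univ : Set (EuclideanSpace ℝ (Fin n)))) (a := s) (b := t)
        (f := x) (g := fun r => T r s (x s)) (fun r _ => hv r)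
        (fun r _ => (hx r).continuousAt.continuousWithinAt)
        (fun r _ => (hx r).hasDerivWithinAt)
        (fun _ _ => mem_univ _)
        (fun r _ => (hT_sol s (x s) r).continuousAt.continuousWithinAt)
        (fun r _ => (hT_sol s (x s) r).hasDerivWithinAt)
        (fun _ _ => mem_univ _) hxs
      exact this ⟨h, le_rfl⟩
    · have := ODE_solution_unique_of_mem_Icc_left (v := fun r y => A r y)
        (s := fun _ => (univ : Set (EuclideanSpace ℝ (Fin n)))) (a := t) (b := s)
        (f := x) (g := fun r => T r s (x s)) (fun r _ => hv r)
        (fun r _ => (hx r).continuousAt.continuousWithinAt)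
        (fun r _ => (hx r).hasDerivWithinAt)
        (fun _ _ => mem_univ _)
        (fun r _ => (hT_sol s (x s) r).continuousAt.continuousWithinAt)
        (fun r _ => (hT_sol s (x s) r).hasDerivWithinAt)
        (fun _ _ => mem_univ _) hxs
      exact this ⟨le_rfl, h⟩
  intro t
  -- P part: let s → -∞
  have hPbound : ∀ s, s ≤ t → ‖P t (x t)‖ ≤ K * (μ t / μ s) ^ (-α) * C := by
    intro s hs
    have h1 : P t (x t) = ((T t s).comp (P s)) (x s) := by
      rw [h_commute]
      simp only [ContinuousLinearMap.comp_apply]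
      rw [← key s t]
    rw [h1]
    calc ‖((T t s).comp (P s)) (x s)‖ ≤ ‖(T t s).comp (P s)‖ * ‖x s‖ :=
          (T t s |>.comp (P s)).le_opNorm _
      _ ≤ K * (μ t / μ s) ^ (-α) * C :=
          mul_le_mul (h_dichP t s hs) (hC s) (norm_nonneg _)
            (mul_nonneg hK.le (Real.rpow_nonneg (div_nonneg (hμ_pos t).le (hμ_pos s).le) _))
  have hμinv : Tendsto (fun s => μ t / μ s) atBot atTop := by
    have h1 : Tendsto μ atBot (nhdsWithin 0 (Ioi 0)) :=
      tendsto_nhdsWithin_iff.mpr ⟨hμ_bot, Eventually.of_forall fun s => hμ_pos s⟩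
    simpa [div_eq_mul_inv] using (h1.inv_tendsto_nhdsGT_zero).const_mul_atTop (hμ_pos t)
  have hPt : Tendsto (fun s => K * (μ t / μ s) ^ (-α) * C) atBot (nhds 0) := by
    have := (tendsto_rpow_neg_atTop hα).comp hμinv
    simpa using (this.const_mul K).mul_const C
  have hPz : P t (x t) = 0 := by
    have hle : ‖P t (x t)‖ ≤ 0 :=
      ge_of_tendsto hPt (eventually_atBot.mpr ⟨t, fun s hs => hPbound s hs⟩)
    exact norm_le_zero_iff.mp hle
  -- Q part: let s → +∞
  have hQcomm : ∀ s,
      (T t s).comp (ContinuousLinearMap.id ℝ (EuclideanSpace ℝ (Fin n)) - P s)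
        = (ContinuousLinearMap.id ℝ (EuclideanSpace ℝ (Fin n)) - P t).comp (T t s) := by
    intro s
    rw [ContinuousLinearMap.comp_sub, ContinuousLinearMap.sub_comp,
      ContinuousLinearMap.comp_id, ContinuousLinearMap.id_comp, h_commute]
  have hQbound : ∀ s, t ≤ s → ‖x t - P t (x t)‖ ≤ K * (μ s / μ t) ^ (-α) * C := by
    intro s hs
    have h1 : x t - P t (x t)
        = ((T t s).comp (ContinuousLinearMap.id ℝ (EuclideanSpace ℝ (Fin n)) - P s)) (x s) := by
      rw [hQcomm s]
      simp only [ContinuousLinearMap.comp_apply, ContinuousLinearMap.sub_apply,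
        ContinuousLinearMap.id_apply]
      rw [← key s t]
    rw [h1]
    calc ‖((T t s).comp (ContinuousLinearMap.id ℝ (EuclideanSpace ℝ (Fin n)) - P s)) (x s)‖
        ≤ ‖(T t s).comp (ContinuousLinearMap.id ℝ (EuclideanSpace ℝ (Fin n)) - P s)‖ * ‖x s‖ :=
          ContinuousLinearMap.le_opNorm _ _
      _ ≤ K * (μ s / μ t) ^ (-α) * C :=
          mul_le_mul (h_dichQ t s hs) (hC s) (norm_nonneg _) (mul_nonneg hK.le (Real.rpow_nonneg (div_nonneg (hμ_pos s).le (hμ_pos t).le) _))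
  have hμtop : Tendsto (fun s => μ s / μ t) atTop atTop :=
    hμ_top.atTop_div_const (hμ_pos t)
  have hQt : Tendsto (fun s => K * (μ s / μ t) ^ (-α) * C) atTop (nhds 0) := by
    have := (tendsto_rpow_neg_atTop hα).comp hμtop
    simpa using (this.const_mul K).mul_const C
  have hQz : x t - P t (x t) = 0 := by
    have hle : ‖x t - P t (x t)‖ ≤ 0 :=
      ge_of_tendsto hQt (eventually_atTop.mpr ⟨t, fun s hs => hQbound s hs⟩)
    exact norm_le_zero_iff.mp hle
  have hsum : x t = P t (x t) + (x t - P t (x t)) := by abel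
  rw [hQz, hPz] at hsum
  simpa using hsum
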